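/- Let 𝒜 be a real n×n matrix, and let M₀, M₁, N₀, N₁ be real symmetric positive definite n×n matrices. Suppose there are constants 0 < c̲₀ ≤ c̄₀ and 0 < c̲₁ ≤ c̄₁ such that c̲₀‖u‖_{M₀} ≤ ‖𝒜u‖_{N₀} ≤ c̄₀‖u‖_{M₀} and c̲₁‖u‖_{M₁} ≤ ‖𝒜u‖_{N₁} ≤ c̄₁‖u‖_{M₁} for all u ∈ ℝⁿ, where ‖v‖_M := √(vᵀMv). Then, with the geometric means M_{1/2} := M₀^{1/2}(M₀^{−1/2}M₁M₀^{−1/2})^{1/2}M₀^{1/2} and N_{1/2} := N₀^{1/2}(N₀^{−1/2}N₁N₀^{−1/2})^{1/2}N₀^{1/2}, it holds that √(c̲₀ c̲₁) ‖u‖_{M_{1/2}} ≤ ‖𝒜u‖_{N_{1/2}} ≤ √(c̄₀ c̄₁) ‖u‖_{M_{1/2}} for all u ∈ ℝⁿ. (Operator interpolation theorem for the case ϑ = 1/2.) -/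

import Mathlib

open Matrix

namespace Stmt17Aux

variable {n : ℕ}

lemma dot_sq_le (v w : Fin n → ℝ) : (v ⬝ᵥ w)^2 ≤ (v ⬝ᵥ v) * (w ⬝ᵥ w) := by
  have := Finset.sum_mul_sq_le_sq_mul_sq Finset.univ v w
  simpa [dotProduct, pow_two] using this

lemma dot_self_nonneg (v : Fin n → ℝ) : 0 ≤ v ⬝ᵥ v :=
  Finset.sum_nonneg fun i _ => mul_self_nonneg _

lemma dot_shift (M : Matrix (Fin n) (Fin n) ℝ) (v w : Fin n → ℝ) :
    (M *ᵥ v) ⬝ᵥ w = v ⬝ᵥ (Mᵀ *ᵥ w) := by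
  rw [dotProduct_mulVec, vecMul_transpose]

lemma psd_dot_nonneg {M : Matrix (Fin n) (Fin n) ℝ} (hM : M.PosSemidef) (x : Fin n → ℝ) :
    0 ≤ x ⬝ᵥ (M *ᵥ x) := by simpa using hM.dotProduct_mulVec_nonneg x

lemma sq_form {P : Matrix (Fin n) (Fin n) ℝ} (hP : Pᵀ = P) (v : Fin n → ℝ) :
    (P *ᵥ v) ⬝ᵥ (P *ᵥ v) = v ⬝ᵥ ((P * P) *ᵥ v) := by
  rw [dot_shift, hP, mulVec_mulVec]

lemma sandwich {P : Matrix (Fin n) (Fin n) ℝ} (hP : Pᵀ = P)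
    (N : Matrix (Fin n) (Fin n) ℝ) (v : Fin n → ℝ) :
    (P *ᵥ v) ⬝ᵥ (N *ᵥ (P *ᵥ v)) = v ⬝ᵥ ((P * N * P) *ᵥ v) := by
  rw [dot_shift, hP, mulVec_mulVec, mulVec_mulVec, Matrix.mul_assoc]

/-- monotonicity of the square root, quadratic-form version -/
lemma lemA {K G : Matrix (Fin n) (Fin n) ℝ} (hK : K.PosSemidef) (hG : G.PosSemidef)
    (h : ∀ x, (K *ᵥ x) ⬝ᵥ (K *ᵥ x) ≤ (G *ᵥ x) ⬝ᵥ (G *ᵥ x)) :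
    ∀ x, x ⬝ᵥ (K *ᵥ x) ≤ x ⬝ᵥ (G *ᵥ x) := by
  classical
  have hD : (G - K).IsHermitian := hG.1.sub hK.1
  have hPSD : (G - K).PosSemidef := by
    apply hD.posSemidef_iff_eigenvalues_nonneg.mpr
    intro i
    show (0:ℝ) ≤ hD.eigenvalues i
    set v : Fin n → ℝ := ⇑(hD.eigenvectorBasis i) with hv
    set lam := hD.eigenvalues i with hlam
    have hev : (G - K) *ᵥ v = lam • v := hD.mulVec_eigenvectorBasis i
    have hKv : K *ᵥ v = G *ᵥ v - lam • v := by
      rw [sub_mulVec] at hev; linear_combination (norm := module) - hev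
    have hvv : v ⬝ᵥ v = 1 := by
      have h1 : ‖hD.eigenvectorBasis i‖ = 1 := (hD.eigenvectorBasis.orthonormal).1 i
      have h2 : v ⬝ᵥ v = ‖hD.eigenvectorBasis i‖ ^ 2 := by
        rw [EuclideanSpace.norm_eq, Real.sq_sqrt (Finset.sum_nonneg fun i _ => sq_nonneg _)]
        simp [dotProduct, sq, hv]
      rw [h2, h1, one_pow]
    have hGv : 0 ≤ v ⬝ᵥ (G *ᵥ v) := psd_dot_nonneg hG v
    have hGvc : (G *ᵥ v) ⬝ᵥ v = v ⬝ᵥ (G *ᵥ v) := dotProduct_comm _ _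
    have hineq := h v
    rw [hKv] at hineq
    have hexp : (G *ᵥ v - lam • v) ⬝ᵥ (G *ᵥ v - lam • v)
        = (G *ᵥ v) ⬝ᵥ (G *ᵥ v) - 2 * lam * (v ⬝ᵥ (G *ᵥ v)) + lam^2 * (v ⬝ᵥ v) := by
      simp only [sub_dotProduct, dotProduct_sub, smul_dotProduct, dotProduct_smul,
        smul_eq_mul, hGvc]
      ring
    rw [hexp, hvv] at hineq
    nlinarith [hineq, hGv]
  intro x
  have := psd_dot_nonneg hPSD x
  rw [sub_mulVec, dotProduct_sub] at this
  linarith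

/-- transpose of a bounded operator is bounded -/
lemma transpose_bound {B : Matrix (Fin n) (Fin n) ℝ} {a : ℝ}
    (h0 : ∀ x, (B *ᵥ x) ⬝ᵥ (B *ᵥ x) ≤ a^2 * (x ⬝ᵥ x)) (y : Fin n → ℝ) :
    (Bᵀ *ᵥ y) ⬝ᵥ (Bᵀ *ᵥ y) ≤ a^2 * (y ⬝ᵥ y) := by
  set z := Bᵀ *ᵥ y with hz
  have h1 : z ⬝ᵥ z = (B *ᵥ z) ⬝ᵥ y := by rw [dot_shift B z y, hz]
  have h2 : ((B *ᵥ z) ⬝ᵥ y)^2 ≤ ((B *ᵥ z) ⬝ᵥ (B *ᵥ z)) * (y ⬝ᵥ y) := dot_sq_le _ _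
  have h3 := h0 z
  have hzz := dot_self_nonneg z
  have hyy := dot_self_nonneg y
  rcases eq_or_lt_of_le hzz with hzz0 | hzz0
  · rw [← hzz0]; positivity
  · have h4 : (z ⬝ᵥ z)^2 ≤ a^2 * (z ⬝ᵥ z) * (y ⬝ᵥ y) := by
      calc (z ⬝ᵥ z)^2 = ((B *ᵥ z) ⬝ᵥ y)^2 := by rw [h1]
        _ ≤ ((B *ᵥ z) ⬝ᵥ (B *ᵥ z)) * (y ⬝ᵥ y) := h2
        _ ≤ a^2 * (z ⬝ᵥ z) * (y ⬝ᵥ y) := by nlinarith [h3, hyy]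
    nlinarith [h4, hzz0]

/-- the core interpolation inequality in Euclidean coordinates -/
lemma core {B Hm Gm : Matrix (Fin n) (Fin n) ℝ} (hH : Hm.PosSemidef) (hG : Gm.PosSemidef)
    {a b : ℝ} (ha : 0 ≤ a) (hb : 0 ≤ b)
    (h0 : ∀ x, (B *ᵥ x) ⬝ᵥ (B *ᵥ x) ≤ a^2 * (x ⬝ᵥ x))
    (h1 : ∀ x, (Hm *ᵥ (B *ᵥ x)) ⬝ᵥ (Hm *ᵥ (B *ᵥ x)) ≤ b^2 * ((Gm *ᵥ x) ⬝ᵥ (Gm *ᵥ x))) :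
    ∀ x, (B *ᵥ x) ⬝ᵥ (Hm *ᵥ (B *ᵥ x)) ≤ (a*b) * (x ⬝ᵥ (Gm *ᵥ x)) := by
  classical
  set K : Matrix (Fin n) (Fin n) ℝ := Bᵀ * Hm * B with hKdef
  have hKpsd : K.PosSemidef := by
    have := hH.conjTranspose_mul_mul_same B
    simpa [hKdef, conjTranspose_eq_transpose_of_trivial] using this
  set G' : Matrix (Fin n) (Fin n) ℝ := (a*b) • Gm with hG'def
  have hab : (0:ℝ) ≤ a * b := mul_nonneg ha hb
  have hG'psd : G'.PosSemidef := by
    refine .of_dotProduct_mulVec_nonneg ?_ ?_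
    · show G'ᴴ = G'
      rw [hG'def, conjTranspose_smul, hG.1.eq, star_trivial]
    · intro x
      rw [hG'def, smul_mulVec, dotProduct_smul, smul_eq_mul]
      exact mul_nonneg hab (hG.dotProduct_mulVec_nonneg x)
  have hKx : ∀ x, K *ᵥ x = Bᵀ *ᵥ (Hm *ᵥ (B *ᵥ x)) := by
    intro x
    rw [hKdef, Matrix.mul_assoc, ← mulVec_mulVec, ← mulVec_mulVec]
  have key : ∀ x, (K *ᵥ x) ⬝ᵥ (K *ᵥ x) ≤ (G' *ᵥ x) ⬝ᵥ (G' *ᵥ x) := by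
    intro x
    have s1 : (K *ᵥ x) ⬝ᵥ (K *ᵥ x) ≤ a^2 * ((Hm *ᵥ (B *ᵥ x)) ⬝ᵥ (Hm *ᵥ (B *ᵥ x))) := by
      rw [hKx]; exact transpose_bound h0 _
    have s2 := h1 x
    have s3 : (G' *ᵥ x) ⬝ᵥ (G' *ᵥ x) = (a*b)^2 * ((Gm *ᵥ x) ⬝ᵥ (Gm *ᵥ x)) := by
      rw [hG'def, smul_mulVec, smul_dotProduct, dotProduct_smul, smul_eq_mul, smul_eq_mul]
      ring
    rw [s3]
    calc (K *ᵥ x) ⬝ᵥ (K *ᵥ x) ≤ a^2 * ((Hm *ᵥ (B *ᵥ x)) ⬝ᵥ (Hm *ᵥ (B *ᵥ x))) := s1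
      _ ≤ a^2 * (b^2 * ((Gm *ᵥ x) ⬝ᵥ (Gm *ᵥ x))) :=
          mul_le_mul_of_nonneg_left s2 (sq_nonneg a)
      _ = (a*b)^2 * ((Gm *ᵥ x) ⬝ᵥ (Gm *ᵥ x)) := by ring
  intro x
  have hfin := lemA hKpsd hG'psd key x
  have e1 : x ⬝ᵥ (K *ᵥ x) = (B *ᵥ x) ⬝ᵥ (Hm *ᵥ (B *ᵥ x)) := by
    rw [hKx, ← dot_shift B x (Hm *ᵥ (B *ᵥ x))]
  have e2 : x ⬝ᵥ (G' *ᵥ x) = (a*b) * (x ⬝ᵥ (Gm *ᵥ x)) := by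
    rw [hG'def, smul_mulVec, dotProduct_smul, smul_eq_mul]
  rw [e1, e2] at hfin
  exact hfin

/-- translation layer: the interpolation inequality in weighted coordinates -/
lemma upper {𝒜 S T Gm Hm : Matrix (Fin n) (Fin n) ℝ}
    (hSdet : IsUnit S.det)
    (hH : Hm.PosSemidef) (hG : Gm.PosSemidef)
    {a b : ℝ} (ha : 0 ≤ a) (hb : 0 ≤ b)
    (h0 : ∀ u, (T *ᵥ (𝒜 *ᵥ u)) ⬝ᵥ (T *ᵥ (𝒜 *ᵥ u)) ≤ a^2 * ((S *ᵥ u) ⬝ᵥ (S *ᵥ u)))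
    (h1 : ∀ u, (Hm *ᵥ (T *ᵥ (𝒜 *ᵥ u))) ⬝ᵥ (Hm *ᵥ (T *ᵥ (𝒜 *ᵥ u)))
        ≤ b^2 * ((Gm *ᵥ (S *ᵥ u)) ⬝ᵥ (Gm *ᵥ (S *ᵥ u)))) :
    ∀ u, (T *ᵥ (𝒜 *ᵥ u)) ⬝ᵥ (Hm *ᵥ (T *ᵥ (𝒜 *ᵥ u)))
        ≤ (a*b) * ((S *ᵥ u) ⬝ᵥ (Gm *ᵥ (S *ᵥ u))) := by
  set B : Matrix (Fin n) (Fin n) ℝ := T * 𝒜 * S⁻¹ with hBdef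
  have hBx : ∀ x, B *ᵥ x = T *ᵥ (𝒜 *ᵥ (S⁻¹ *ᵥ x)) := by
    intro x; rw [hBdef, Matrix.mul_assoc, ← mulVec_mulVec, ← mulVec_mulVec]
  have hSS : ∀ x, S *ᵥ (S⁻¹ *ᵥ x) = x := by
    intro x; rw [mulVec_mulVec, Matrix.mul_nonsing_inv S hSdet, one_mulVec]
  have hSiS : ∀ u, S⁻¹ *ᵥ (S *ᵥ u) = u := by
    intro u; rw [mulVec_mulVec, Matrix.nonsing_inv_mul S hSdet, one_mulVec]
  have h0' : ∀ x, (B *ᵥ x) ⬝ᵥ (B *ᵥ x) ≤ a^2 * (x ⬝ᵥ x) := by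
    intro x
    have := h0 (S⁻¹ *ᵥ x)
    rwa [hSS x, ← hBx x] at this
  have h1' : ∀ x, (Hm *ᵥ (B *ᵥ x)) ⬝ᵥ (Hm *ᵥ (B *ᵥ x))
      ≤ b^2 * ((Gm *ᵥ x) ⬝ᵥ (Gm *ᵥ x)) := by
    intro x
    have := h1 (S⁻¹ *ᵥ x)
    rwa [hSS x, ← hBx x] at this
  intro u
  have := core hH hG ha hb h0' h1' (S *ᵥ u)
  rwa [hBx, hSiS u] at this

end Stmt17Aux

open Stmt17Aux in
/-- Operator interpolation theorem for `ϑ = 1/2`: if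
`c̲₀‖u‖_{M₀} ≤ ‖𝒜u‖_{N₀} ≤ c̄₀‖u‖_{M₀}` and `c̲₁‖u‖_{M₁} ≤ ‖𝒜u‖_{N₁} ≤ c̄₁‖u‖_{M₁}`
for all `u`, then `√(c̲₀c̲₁)‖u‖_{M_{1/2}} ≤ ‖𝒜u‖_{N_{1/2}} ≤ √(c̄₀c̄₁)‖u‖_{M_{1/2}}`,
where `M_{1/2} = [M₀,M₁]_{1/2}` and `N_{1/2} = [N₀,N₁]_{1/2}` are the geometric means,
expressed as `M_{1/2} = S·G·S` with `S`, `G` the positive semidefinite square roots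
characterized by `S * S = M₀`, `G * G = S⁻¹ * M₁ * S⁻¹` (and analogously `T`, `H`). -/
theorem stmt_17 (n : ℕ) (𝒜 M₀ M₁ N₀ N₁ : Matrix (Fin n) (Fin n) ℝ)
    (hM₀ : M₀.PosDef) (hM₁ : M₁.PosDef) (hN₀ : N₀.PosDef) (hN₁ : N₁.PosDef)
    (c₀ c₁ C₀ C₁ : ℝ) (hc₀ : 0 < c₀) (hc₁ : 0 < c₁) (hcC₀ : c₀ ≤ C₀) (hcC₁ : c₁ ≤ C₁)
    (h₀ : ∀ u : Fin n → ℝ,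
      c₀ * Real.sqrt (u ⬝ᵥ (M₀ *ᵥ u)) ≤ Real.sqrt ((𝒜 *ᵥ u) ⬝ᵥ (N₀ *ᵥ (𝒜 *ᵥ u))) ∧
      Real.sqrt ((𝒜 *ᵥ u) ⬝ᵥ (N₀ *ᵥ (𝒜 *ᵥ u))) ≤ C₀ * Real.sqrt (u ⬝ᵥ (M₀ *ᵥ u)))
    (h₁ : ∀ u : Fin n → ℝ,
      c₁ * Real.sqrt (u ⬝ᵥ (M₁ *ᵥ u)) ≤ Real.sqrt ((𝒜 *ᵥ u) ⬝ᵥ (N₁ *ᵥ (𝒜 *ᵥ u))) ∧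
      Real.sqrt ((𝒜 *ᵥ u) ⬝ᵥ (N₁ *ᵥ (𝒜 *ᵥ u))) ≤ C₁ * Real.sqrt (u ⬝ᵥ (M₁ *ᵥ u)))
    (S G T H : Matrix (Fin n) (Fin n) ℝ)
    (hS : S.PosSemidef) (hS2 : S * S = M₀)
    (hG : G.PosSemidef) (hG2 : G * G = S⁻¹ * M₁ * S⁻¹)
    (hT : T.PosSemidef) (hT2 : T * T = N₀)
    (hH : H.PosSemidef) (hH2 : H * H = T⁻¹ * N₁ * T⁻¹) :
    ∀ u : Fin n → ℝ,
      Real.sqrt (c₀ * c₁) * Real.sqrt (u ⬝ᵥ ((S * G * S) *ᵥ u))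
        ≤ Real.sqrt ((𝒜 *ᵥ u) ⬝ᵥ ((T * H * T) *ᵥ (𝒜 *ᵥ u))) ∧
      Real.sqrt ((𝒜 *ᵥ u) ⬝ᵥ ((T * H * T) *ᵥ (𝒜 *ᵥ u)))
        ≤ Real.sqrt (C₀ * C₁) * Real.sqrt (u ⬝ᵥ ((S * G * S) *ᵥ u)) := by
  have hC₀ : 0 < C₀ := lt_of_lt_of_le hc₀ hcC₀
  have hC₁ : 0 < C₁ := lt_of_lt_of_le hc₁ hcC₁
  -- symmetry of the square roots
  have hSt : Sᵀ = S := by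
    rw [← conjTranspose_eq_transpose_of_trivial]; exact hS.1
  have hTt : Tᵀ = T := by
    rw [← conjTranspose_eq_transpose_of_trivial]; exact hT.1
  have hGt : Gᵀ = G := by
    rw [← conjTranspose_eq_transpose_of_trivial]; exact hG.1
  have hHt : Hᵀ = H := by
    rw [← conjTranspose_eq_transpose_of_trivial]; exact hH.1
  -- invertibility of S and T
  have hSdet : IsUnit S.det := by
    have h : S.det * S.det = M₀.det := by rw [← det_mul, hS2]
    have hpos := hM₀.det_pos
    apply isUnit_iff_ne_zero.mpr
    intro h0; rw [h0, mul_zero] at h; rw [← h] at hpos; exact lt_irrefl 0 hpos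
  have hTdet : IsUnit T.det := by
    have h : T.det * T.det = N₀.det := by rw [← det_mul, hT2]
    have hpos := hN₀.det_pos
    apply isUnit_iff_ne_zero.mpr
    intro h0; rw [h0, mul_zero] at h; rw [← h] at hpos; exact lt_irrefl 0 hpos
  -- recover M₁ and N₁
  have hM₁eq : S * (G * G) * S = M₁ := by
    rw [hG2]
    simp only [Matrix.mul_assoc]
    rw [Matrix.nonsing_inv_mul S hSdet, Matrix.mul_one, ← Matrix.mul_assoc,
      Matrix.mul_nonsing_inv S hSdet, Matrix.one_mul]
  have hN₁eq : T * (H * H) * T = N₁ := by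
    rw [hH2]
    simp only [Matrix.mul_assoc]
    rw [Matrix.nonsing_inv_mul T hTdet, Matrix.mul_one, ← Matrix.mul_assoc,
      Matrix.mul_nonsing_inv T hTdet, Matrix.one_mul]
  -- squared versions of the hypotheses
  have q0l : ∀ u, c₀^2 * (u ⬝ᵥ (M₀ *ᵥ u)) ≤ (𝒜 *ᵥ u) ⬝ᵥ (N₀ *ᵥ (𝒜 *ᵥ u)) := by
    intro u
    have h := (h₀ u).1
    have hq : 0 ≤ u ⬝ᵥ (M₀ *ᵥ u) := psd_dot_nonneg hM₀.posSemidef u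
    have hr : 0 ≤ (𝒜 *ᵥ u) ⬝ᵥ (N₀ *ᵥ (𝒜 *ᵥ u)) := psd_dot_nonneg hN₀.posSemidef _
    have hcc : 0 ≤ c₀ * Real.sqrt (u ⬝ᵥ (M₀ *ᵥ u)) :=
      mul_nonneg hc₀.le (Real.sqrt_nonneg _)
    have h2 := mul_self_le_mul_self hcc h
    rw [Real.mul_self_sqrt hr] at h2
    calc c₀^2 * (u ⬝ᵥ (M₀ *ᵥ u))
        = (c₀ * Real.sqrt (u ⬝ᵥ (M₀ *ᵥ u))) * (c₀ * Real.sqrt (u ⬝ᵥ (M₀ *ᵥ u))) := by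
          rw [mul_mul_mul_comm, Real.mul_self_sqrt hq, pow_two]
      _ ≤ (𝒜 *ᵥ u) ⬝ᵥ (N₀ *ᵥ (𝒜 *ᵥ u)) := h2
  have q0u : ∀ u, (𝒜 *ᵥ u) ⬝ᵥ (N₀ *ᵥ (𝒜 *ᵥ u)) ≤ C₀^2 * (u ⬝ᵥ (M₀ *ᵥ u)) := by
    intro u
    have h := (h₀ u).2
    have hq : 0 ≤ u ⬝ᵥ (M₀ *ᵥ u) := psd_dot_nonneg hM₀.posSemidef u
    have hr : 0 ≤ (𝒜 *ᵥ u) ⬝ᵥ (N₀ *ᵥ (𝒜 *ᵥ u)) := psd_dot_nonneg hN₀.posSemidef _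
    have h2 := mul_self_le_mul_self (Real.sqrt_nonneg _) h
    rw [Real.mul_self_sqrt hr] at h2
    calc (𝒜 *ᵥ u) ⬝ᵥ (N₀ *ᵥ (𝒜 *ᵥ u))
        ≤ (C₀ * Real.sqrt (u ⬝ᵥ (M₀ *ᵥ u))) * (C₀ * Real.sqrt (u ⬝ᵥ (M₀ *ᵥ u))) := h2
      _ = C₀^2 * (u ⬝ᵥ (M₀ *ᵥ u)) := by rw [mul_mul_mul_comm, Real.mul_self_sqrt hq, pow_two]
  have q1l : ∀ u, c₁^2 * (u ⬝ᵥ (M₁ *ᵥ u)) ≤ (𝒜 *ᵥ u) ⬝ᵥ (N₁ *ᵥ (𝒜 *ᵥ u)) := by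
    intro u
    have h := (h₁ u).1
    have hq : 0 ≤ u ⬝ᵥ (M₁ *ᵥ u) := psd_dot_nonneg hM₁.posSemidef u
    have hr : 0 ≤ (𝒜 *ᵥ u) ⬝ᵥ (N₁ *ᵥ (𝒜 *ᵥ u)) := psd_dot_nonneg hN₁.posSemidef _
    have hcc : 0 ≤ c₁ * Real.sqrt (u ⬝ᵥ (M₁ *ᵥ u)) :=
      mul_nonneg hc₁.le (Real.sqrt_nonneg _)
    have h2 := mul_self_le_mul_self hcc h
    rw [Real.mul_self_sqrt hr] at h2
    calc c₁^2 * (u ⬝ᵥ (M₁ *ᵥ u))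
        = (c₁ * Real.sqrt (u ⬝ᵥ (M₁ *ᵥ u))) * (c₁ * Real.sqrt (u ⬝ᵥ (M₁ *ᵥ u))) := by
          rw [mul_mul_mul_comm, Real.mul_self_sqrt hq, pow_two]
      _ ≤ (𝒜 *ᵥ u) ⬝ᵥ (N₁ *ᵥ (𝒜 *ᵥ u)) := h2
  have q1u : ∀ u, (𝒜 *ᵥ u) ⬝ᵥ (N₁ *ᵥ (𝒜 *ᵥ u)) ≤ C₁^2 * (u ⬝ᵥ (M₁ *ᵥ u)) := by
    intro u
    have h := (h₁ u).2
    have hq : 0 ≤ u ⬝ᵥ (M₁ *ᵥ u) := psd_dot_nonneg hM₁.posSemidef u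
    have hr : 0 ≤ (𝒜 *ᵥ u) ⬝ᵥ (N₁ *ᵥ (𝒜 *ᵥ u)) := psd_dot_nonneg hN₁.posSemidef _
    have h2 := mul_self_le_mul_self (Real.sqrt_nonneg _) h
    rw [Real.mul_self_sqrt hr] at h2
    calc (𝒜 *ᵥ u) ⬝ᵥ (N₁ *ᵥ (𝒜 *ᵥ u))
        ≤ (C₁ * Real.sqrt (u ⬝ᵥ (M₁ *ᵥ u))) * (C₁ * Real.sqrt (u ⬝ᵥ (M₁ *ᵥ u))) := h2
      _ = C₁^2 * (u ⬝ᵥ (M₁ *ᵥ u)) := by rw [mul_mul_mul_comm, Real.mul_self_sqrt hq, pow_two]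
  -- upper quadratic bound
  have QU : ∀ u, (𝒜 *ᵥ u) ⬝ᵥ ((T * H * T) *ᵥ (𝒜 *ᵥ u))
      ≤ (C₀ * C₁) * (u ⬝ᵥ ((S * G * S) *ᵥ u)) := by
    have h0v : ∀ w, (T *ᵥ (𝒜 *ᵥ w)) ⬝ᵥ (T *ᵥ (𝒜 *ᵥ w))
        ≤ C₀^2 * ((S *ᵥ w) ⬝ᵥ (S *ᵥ w)) := by
      intro w
      rw [sq_form hTt, sq_form hSt, hT2, hS2]
      exact q0u w
    have h1v : ∀ w, (H *ᵥ (T *ᵥ (𝒜 *ᵥ w))) ⬝ᵥ (H *ᵥ (T *ᵥ (𝒜 *ᵥ w)))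
        ≤ C₁^2 * ((G *ᵥ (S *ᵥ w)) ⬝ᵥ (G *ᵥ (S *ᵥ w))) := by
      intro w
      rw [sq_form hHt, sq_form hGt, sandwich hTt, sandwich hSt, hN₁eq, hM₁eq]
      exact q1u w
    intro u
    have h := upper hSdet hH hG (le_of_lt hC₀) (le_of_lt hC₁) h0v h1v u
    rwa [sandwich hTt, sandwich hSt] at h
  -- invertibility of 𝒜
  have h𝒜inj : Function.Injective 𝒜.mulVec := by
    intro x y hxy
    have hz : 𝒜 *ᵥ (x - y) = 0 := by
      show 𝒜.mulVec (x - y) = 0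
      rw [mulVec_sub, hxy, sub_self]
    by_contra hne
    have hd : x - y ≠ 0 := fun h => hne (sub_eq_zero.mp h)
    have hpos : 0 < (x - y) ⬝ᵥ (M₀ *ᵥ (x - y)) := by simpa using hM₀.dotProduct_mulVec_pos hd
    have h := q0l (x - y)
    rw [hz] at h
    simp only [mulVec_zero, dotProduct_zero] at h
    have := mul_pos (pow_pos hc₀ 2) hpos
    linarith
  have h𝒜det : IsUnit 𝒜.det := by
    rw [← Matrix.isUnit_iff_isUnit_det]
    exact Matrix.mulVec_injective_iff_isUnit.mp h𝒜inj
  have h𝒜inv : ∀ u, 𝒜⁻¹ *ᵥ (𝒜 *ᵥ u) = u := by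
    intro u; rw [mulVec_mulVec, Matrix.nonsing_inv_mul 𝒜 h𝒜det, one_mulVec]
  have h𝒜inv' : ∀ w, 𝒜 *ᵥ (𝒜⁻¹ *ᵥ w) = w := by
    intro w; rw [mulVec_mulVec, Matrix.mul_nonsing_inv 𝒜 h𝒜det, one_mulVec]
  -- lower quadratic bound
  have QL : ∀ u, (c₀ * c₁) * (u ⬝ᵥ ((S * G * S) *ᵥ u))
      ≤ (𝒜 *ᵥ u) ⬝ᵥ ((T * H * T) *ᵥ (𝒜 *ᵥ u)) := by
    have h0v : ∀ w, (S *ᵥ (𝒜⁻¹ *ᵥ w)) ⬝ᵥ (S *ᵥ (𝒜⁻¹ *ᵥ w))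
        ≤ (c₀⁻¹)^2 * ((T *ᵥ w) ⬝ᵥ (T *ᵥ w)) := by
      intro w
      rw [sq_form hSt, sq_form hTt, hT2, hS2]
      have h := q0l (𝒜⁻¹ *ᵥ w)
      rw [h𝒜inv' w] at h
      rw [inv_pow, le_inv_mul_iff₀ (by positivity)]
      exact h
    have h1v : ∀ w, (G *ᵥ (S *ᵥ (𝒜⁻¹ *ᵥ w))) ⬝ᵥ (G *ᵥ (S *ᵥ (𝒜⁻¹ *ᵥ w)))
        ≤ (c₁⁻¹)^2 * ((H *ᵥ (T *ᵥ w)) ⬝ᵥ (H *ᵥ (T *ᵥ w))) := by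
      intro w
      rw [sq_form hGt, sandwich hSt, hM₁eq, sq_form hHt, sandwich hTt, hN₁eq]
      have h := q1l (𝒜⁻¹ *ᵥ w)
      rw [h𝒜inv' w] at h
      rw [inv_pow, le_inv_mul_iff₀ (by positivity)]
      exact h
    intro u
    have h := upper hTdet hG hH (le_of_lt (inv_pos.mpr hc₀)) (le_of_lt (inv_pos.mpr hc₁))
      h0v h1v (𝒜 *ᵥ u)
    rw [h𝒜inv u, sandwich hSt, sandwich hTt] at h
    have hk : (0:ℝ) < c₀ * c₁ := by positivity
    calc (c₀ * c₁) * (u ⬝ᵥ ((S * G * S) *ᵥ u))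
        ≤ (c₀ * c₁) * ((c₀⁻¹ * c₁⁻¹) * ((𝒜 *ᵥ u) ⬝ᵥ ((T * H * T) *ᵥ (𝒜 *ᵥ u)))) :=
          mul_le_mul_of_nonneg_left h hk.le
      _ = (𝒜 *ᵥ u) ⬝ᵥ ((T * H * T) *ᵥ (𝒜 *ᵥ u)) := by
          field_simp
  -- conclude
  intro u
  constructor
  · have h := Real.sqrt_le_sqrt (QL u)
    rwa [Real.sqrt_mul (by positivity : (0:ℝ) ≤ c₀ * c₁)] at h
  · have h := Real.sqrt_le_sqrt (QU u)
    rwa [Real.sqrt_mul (by positivity : (0:ℝ) ≤ C₀ * C₁)] at h
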